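/- Let Z_1,...,Z_{n+1} be exchangeable real-valued random variables that are almost surely distinct (e.g., their joint distribution is continuous), and let t be the ⌈(1-α)(n+1)⌉-th smallest value among Z_1,...,Z_n. Then P(Z_{n+1} ≤ t) ≤ 1-α + 1/(n+1). -/

import Mathlib

open MeasureTheory Finset
open scoped ENNReal

/-- The `k`-th smallest element of a list of reals (1-indexed). -/
noncomputable def orderStat (k : ℕ) (l : List ℝ) : ℝ :=
  (l.insertionSort (· ≤ ·)).getD (k - 1) 0

/-- rank count: number of indices j with v j < v i -/
noncomputable def rk (n : ℕ) (v : Fin (n + 1) → ℝ) (i : Fin (n + 1)) : ℕ :=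
  (Finset.univ.filter (fun j => v j < v i)).card

lemma rk_comp_perm (n : ℕ) (v : Fin (n + 1) → ℝ) (σ : Equiv.Perm (Fin (n + 1)))
    (i : Fin (n + 1)) : rk n (v ∘ σ) i = rk n v (σ i) := by
  unfold rk
  apply Finset.card_bij (fun j _ => σ j)
  · intro a ha; simp_all
  · intro a ha b hb hab; exact σ.injective hab
  · intro b hb; exact ⟨σ.symm b, by simp_all, by simp⟩

lemma rk_le (n : ℕ) (v : Fin (n + 1) → ℝ) (i : Fin (n + 1)) : rk n v i ≤ n := by
  unfold rk
  have h : (Finset.univ.filter (fun j => v j < v i)) ⊆ Finset.univ.erase i := by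
    intro j hj
    simp only [Finset.mem_filter] at hj
    exact Finset.mem_erase.2 ⟨fun h => by simp [h] at hj, Finset.mem_univ j⟩
  calc _ ≤ (Finset.univ.erase i).card := Finset.card_le_card h
    _ = n := by simp

lemma rk_inj (n : ℕ) (v : Fin (n + 1) → ℝ) (hv : Function.Injective v) :
    Function.Injective (fun i => rk n v i) := by
  intro i j hij
  by_contra hne
  have hvne : v i ≠ v j := fun h => hne (hv h)
  wlog h : v i < v j generalizing i j
  · exact this (hij.symm) (Ne.symm hne) hvne.symm (lt_of_le_of_ne (not_lt.1 h) hvne.symm)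
  have : rk n v i < rk n v j := by
    unfold rk
    apply Finset.card_lt_card
    constructor
    · intro a ha
      simp only [Finset.mem_filter] at *
      exact ⟨ha.1, lt_trans ha.2 h⟩
    · intro hsub
      have : i ∈ Finset.univ.filter (fun a => v a < v j) := by
        simp [h]
      have := hsub this
      simp at this
  simp only [hij] at this
  exact lt_irrefl _ this

lemma card_rk_lt (n : ℕ) (v : Fin (n + 1) → ℝ) (hv : Function.Injective v)
    (k : ℕ) (hkn : k ≤ n + 1) :
    (Finset.univ.filter (fun i => rk n v i < k)).card = k := by
  set e : Fin (n + 1) → Fin (n + 1) := fun i => ⟨rk n v i, Nat.lt_succ_of_le (rk_le n v i)⟩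
  have hinj : Function.Injective e := by
    intro a b hab
    exact rk_inj n v hv (congrArg Fin.val hab)
  have hbij : Function.Bijective e := Finite.injective_iff_bijective.1 hinj
  have h1 : (Finset.univ.filter (fun i => rk n v i < k)).card
      = (Finset.univ.filter (fun r : Fin (n+1) => (r : ℕ) < k)).card := by
    apply Finset.card_bij (fun i _ => e i)
    · intro a ha; simp_all [e]
    · intro a _ b _ hab; exact hinj hab
    · intro b hb
      obtain ⟨a, ha⟩ := hbij.2 b
      refine ⟨a, ?_, ha⟩
      simp only [Finset.mem_filter, Finset.mem_univ, true_and] at hb ⊢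
      rw [← ha] at hb
      exact hb
  rw [h1, Finset.card_filter, Fin.sum_univ_eq_sum_range (fun m => if m < k then 1 else 0),
    ← Finset.card_filter]
  have h2 : Finset.filter (fun i => i < k) (Finset.range (n+1)) = Finset.range k := by
    ext i; simp; omega
  rw [h2, Finset.card_range]

lemma countP_ofFn {n : ℕ} (g : Fin n → ℝ) (p : ℝ → Prop) [DecidablePred p] :
    (List.ofFn g).countP (fun x => decide (p x)) = (Finset.univ.filter (fun i => p (g i))).card := by
  rw [List.ofFn_eq_map, List.countP_map, List.countP_eq_length_filter,
      ← List.toFinset_card_of_nodup ((List.nodup_finRange n).filter _)]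
  congr 1
  ext i
  simp [List.mem_filter, Function.comp]

/-- in a list, the number of elements less than the k-th order statistic is at most k-1 -/
lemma count_lt_orderStat {n k : ℕ} (hk1 : 1 ≤ k) (hk : k ≤ n) (g : Fin n → ℝ) :
    (Finset.univ.filter (fun i => g i < orderStat k (List.ofFn g))).card ≤ k - 1 := by
  set s := (List.ofFn g).insertionSort (· ≤ ·) with hs
  have hlen : s.length = n := by
    rw [hs, List.length_insertionSort, List.length_ofFn]
  have hkl : k - 1 < s.length := by omega
  set t := orderStat k (List.ofFn g) with ht
  have htget : t = s[k-1] := by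
    rw [ht]; unfold orderStat
    rw [← hs, List.getD_eq_getElem _ _ hkl]
  have hsorted : s.Pairwise (· ≤ ·) := List.pairwise_insertionSort _ _
  rw [← countP_ofFn g (fun x => x < t)]
  have hperm : (List.ofFn g).countP (fun x => decide (x < t))
      = s.countP (fun x => decide (x < t)) :=
    ((List.perm_insertionSort _ _).symm.countP_eq _)
  rw [hperm]
  have hsplit : s = s.take (k-1) ++ s.drop (k-1) := (List.take_append_drop _ _).symm
  rw [hsplit, List.countP_append]
  have h1 : (s.take (k-1)).countP (fun x => decide (x < t)) ≤ k - 1 := by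
    calc _ ≤ (s.take (k-1)).length := List.countP_le_length
      _ ≤ k - 1 := by rw [List.length_take]; omega
  have h2 : (s.drop (k-1)).countP (fun x => decide (x < t)) = 0 := by
    rw [List.countP_eq_zero]
    intro x hx
    simp only [decide_eq_true_eq, not_lt]
    rw [List.mem_iff_getElem] at hx
    obtain ⟨i, hi, hxi⟩ := hx
    have hi' : k - 1 + i < s.length := by
      have := hi; rw [List.length_drop] at this; omega
    rw [List.getElem_drop] at hxi
    rw [← hxi, htget]
    have := hsorted.rel_get_of_le (a := ⟨k-1, hkl⟩) (b := ⟨k-1+i, hi'⟩) (by simp)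
    simpa using this
  omega

lemma rk_measurable (n : ℕ) (i : Fin (n+1)) :
    Measurable (fun v : Fin (n+1) → ℝ => rk n v i) := by
  have h : (fun v : Fin (n+1) → ℝ => rk n v i)
      = fun v => ∑ j, if v j < v i then 1 else 0 := by
    ext v; rw [rk, Finset.card_filter]
  rw [h]
  exact Finset.measurable_sum _ (fun j _ =>
    Measurable.ite (measurableSet_lt (measurable_pi_apply j) (measurable_pi_apply i))
      measurable_const measurable_const)

/-- Split-conformal coverage upper bound: if `Z 0, ..., Z n` are exchangeable and
almost surely distinct, and `t` is the `⌈(1-α)(n+1)⌉`-th smallest among the first `n`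
(assuming `⌈(1-α)(n+1)⌉ ≤ n`), then `P(Z (n+1) ≤ t) ≤ 1 - α + 1/(n+1)`. -/
theorem stmt1 {Ω : Type*} [MeasurableSpace Ω] (P : Measure Ω) [IsProbabilityMeasure P]
    (n : ℕ) (Z : Fin (n + 1) → Ω → ℝ) (hZ : ∀ i, Measurable (Z i))
    (hexch : ∀ σ : Equiv.Perm (Fin (n + 1)),
      Measure.map (fun ω i => Z (σ i) ω) P = Measure.map (fun ω i => Z i ω) P)
    (hdist : ∀ i j : Fin (n + 1), i ≠ j → P {ω | Z i ω = Z j ω} = 0)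
    (α : ℝ) (hα : α ∈ Set.Ioo (0 : ℝ) 1)
    (hk : ⌈(1 - α) * (n + 1)⌉₊ ≤ n) :
    P {ω | Z (Fin.last n) ω ≤
        orderStat ⌈(1 - α) * (n + 1)⌉₊ (List.ofFn fun i : Fin n => Z i.castSucc ω)} ≤
      ENNReal.ofReal (1 - α + 1 / (n + 1)) := by
  obtain ⟨hα0, hα1⟩ := hα
  set k := ⌈(1 - α) * (n + 1)⌉₊ with hkdef
  have hpos : (0:ℝ) < (1 - α) * (n + 1) := by
    have h1 : (0:ℝ) < 1 - α := by linarith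
    have h2 : (0:ℝ) < (n:ℝ) + 1 := by positivity
    exact mul_pos h1 h2
  have hk1 : 1 ≤ k := Nat.one_le_ceil_iff.2 hpos
  -- the rank sets
  have hS : ∀ i : Fin (n+1), MeasurableSet {v : Fin (n+1) → ℝ | rk n v i < k} :=
    fun i => (rk_measurable n i) (measurableSet_lt measurable_id measurable_const)
  set f : Ω → (Fin (n+1) → ℝ) := fun ω i => Z i ω with hfdef
  have hf : Measurable f := measurable_pi_lambda _ hZ
  set B : Fin (n+1) → Set Ω := fun i => {ω | rk n (f ω) i < k} with hBdef
  have hBmeas : ∀ i, MeasurableSet (B i) := fun i => hf (hS i)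
  -- exchangeability gives equal probabilities
  have hBeq : ∀ i, P (B i) = P (B (Fin.last n)) := by
    intro i
    have h := hexch (Equiv.swap i (Fin.last n))
    have hfσ : Measurable (fun ω j => Z ((Equiv.swap i (Fin.last n)) j) ω) :=
      measurable_pi_lambda _ (fun j => hZ _)
    have h1 : Measure.map (fun ω j => Z ((Equiv.swap i (Fin.last n)) j) ω) P
          {v | rk n v i < k}
        = Measure.map f P {v | rk n v i < k} := by rw [h]
    rw [Measure.map_apply hfσ (hS i), Measure.map_apply hf (hS i)] at h1
    have h2 : (fun ω j => Z ((Equiv.swap i (Fin.last n)) j) ω) ⁻¹' {v | rk n v i < k}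
        = B (Fin.last n) := by
      ext ω
      have : (fun j => Z ((Equiv.swap i (Fin.last n)) j) ω)
          = (f ω) ∘ (Equiv.swap i (Fin.last n)) := rfl
      simp only [Set.mem_preimage, Set.mem_setOf_eq, this, rk_comp_perm,
        Equiv.swap_apply_left, hBdef]
    have h3 : f ⁻¹' {v | rk n v i < k} = B i := rfl
    rw [h2, h3] at h1
    exact h1.symm
  -- the null set of non-distinctness
  set N : Set Ω := ⋃ i, ⋃ j, ⋃ (_ : i ≠ j), {ω | Z i ω = Z j ω} with hNdef
  have hN : P N = 0 := by
    refine measure_iUnion_null fun i => measure_iUnion_null fun j =>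
      measure_iUnion_null fun hij => hdist i j hij
  have hinj : ∀ ω, ω ∉ N → Function.Injective (f ω) := by
    intro ω hω i j hij
    by_contra hne
    exact hω (Set.mem_iUnion.2 ⟨i, Set.mem_iUnion.2 ⟨j, Set.mem_iUnion.2 ⟨hne, hij⟩⟩⟩)
  -- sum of probabilities equals k
  have hsum : ∑ i, P (B i) = (k : ℝ≥0∞) := by
    have e1 : ∀ i, P (B i) = ∫⁻ ω, (B i).indicator 1 ω ∂P := by
      intro i
      rw [lintegral_indicator_one (hBmeas i)]
    rw [Finset.sum_congr rfl (fun i _ => e1 i),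
      ← lintegral_finset_sum _ (fun i _ => measurable_one.indicator (hBmeas i))]
    have e2 : ∀ᵐ ω ∂P, (∑ i, (B i).indicator (1 : Ω → ℝ≥0∞) ω) = (k : ℝ≥0∞) := by
      have : ∀ ω ∉ N, (∑ i, (B i).indicator (1 : Ω → ℝ≥0∞) ω) = (k : ℝ≥0∞) := by
        intro ω hω
        have : ∀ i, (B i).indicator (1 : Ω → ℝ≥0∞) ω
            = if rk n (f ω) i < k then 1 else 0 := by
          intro i
          by_cases hcase : rk n (f ω) i < k <;>
            simp [Set.indicator, hBdef, hcase]
        rw [Finset.sum_congr rfl (fun i _ => this i), Finset.sum_boole,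
          card_rk_lt n (f ω) (hinj ω hω) k (by omega)]
      filter_upwards [measure_eq_zero_iff_ae_notMem.1 hN] with ω hω using this ω hω
    rw [lintegral_congr_ae e2, lintegral_const, measure_univ, mul_one]
  have hcount : (n + 1 : ℝ≥0∞) * P (B (Fin.last n)) = (k : ℝ≥0∞) := by
    rw [← hsum, Finset.sum_congr rfl (fun i _ => hBeq i), Finset.sum_const, card_univ,
      Fintype.card_fin, nsmul_eq_mul]
    push_cast
    ring
  -- the target event is (up to null set) contained in B last
  have hsub : {ω | Z (Fin.last n) ω ≤
        orderStat k (List.ofFn fun i : Fin n => Z i.castSucc ω)} ⊆ B (Fin.last n) ∪ N := by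
    intro ω hω
    by_cases hωN : ω ∈ N
    · exact Or.inr hωN
    refine Or.inl ?_
    simp only [Set.mem_setOf_eq] at hω
    set g : Fin n → ℝ := fun i => Z i.castSucc ω with hg
    set t := orderStat k (List.ofFn g) with htdef
    show rk n (f ω) (Fin.last n) < k
    have hcard : (Finset.univ.filter (fun i => g i < t)).card ≤ k - 1 :=
      count_lt_orderStat hk1 hk g
    have hrk : rk n (f ω) (Fin.last n) ≤ (Finset.univ.filter (fun i => g i < t)).card := by
      rw [rk, Finset.card_filter, Finset.card_filter, Fin.sum_univ_castSucc]
      simp only [lt_irrefl, if_false, add_zero]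
      apply Finset.sum_le_sum
      intro i _
      by_cases hcase : f ω i.castSucc < f ω (Fin.last n)
      · have : g i < t := lt_of_lt_of_le hcase hω
        simp [hcase, this]
      · simp [hcase]
    omega
  -- put it together
  have hB1 : P {ω | Z (Fin.last n) ω ≤
        orderStat k (List.ofFn fun i : Fin n => Z i.castSucc ω)} ≤ P (B (Fin.last n)) := by
    calc _ ≤ P (B (Fin.last n) ∪ N) := measure_mono hsub
      _ ≤ P (B (Fin.last n)) + P N := measure_union_le _ _
      _ = P (B (Fin.last n)) := by rw [hN, add_zero]
  refine hB1.trans ?_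
  -- P(B last) = k/(n+1) ≤ 1-α+1/(n+1)
  have hPB : P (B (Fin.last n)) = (k : ℝ≥0∞) / (n + 1 : ℝ≥0∞) := by
    exact (ENNReal.eq_div_iff (by simp) (by simp)).2 hcount
  rw [hPB]
  have hreal : (k:ℝ) / ((n:ℝ) + 1) ≤ 1 - α + 1 / ((n:ℝ) + 1) := by
    have hn1 : (0:ℝ) < (n:ℝ) + 1 := by positivity
    rw [div_le_iff₀ hn1]
    have hceil : (k:ℝ) < (1 - α) * ((n:ℝ) + 1) + 1 := by
      rw [hkdef]
      exact Nat.ceil_lt_add_one hpos.le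
    have : (1 - α + 1 / ((n:ℝ) + 1)) * ((n:ℝ) + 1) = (1 - α) * ((n:ℝ) + 1) + 1 := by
      field_simp
    rw [this]
    linarith
  calc (k : ℝ≥0∞) / ((n:ℕ) + 1 : ℝ≥0∞)
      = ENNReal.ofReal ((k:ℝ) / ((n:ℝ) + 1)) := by
        rw [ENNReal.ofReal_div_of_pos (by positivity)]
        congr 1
        · exact (ENNReal.ofReal_natCast k).symm
        · rw [← ENNReal.ofReal_natCast n]; rw [ENNReal.ofReal_add] <;> simp
    _ ≤ ENNReal.ofReal (1 - α + 1 / (n + 1)) := ENNReal.ofReal_le_ofReal hreal
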